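/- Let G be a finite directed graph without loops or multiple arrows, in which every vertex has positive in-degree. Let S be a set of m vertices of G. Then there is a subset S' ⊆ S with |S'| ≥ m/3 such that for every w ∈ S' there is an arrow (v, w) of G with v ∉ S'. -/
import Mathlib


theorem lem_palomas (V : Type*) [Fintype V] (R : V → V → Prop)
    (hirr : ∀ v : V, ¬R v v) (hin : ∀ w : V, ∃ v : V, R v w) (S : Finset V) :
    ∃ S' : Finset V, S' ⊆ S ∧ (S.card : ℝ) / 3 ≤ (S'.card : ℝ) ∧
      ∀ w ∈ S', ∃ v : V, v ∉ S' ∧ R v w := by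
  classical
  set f : V → V := fun w => Classical.choose (hin w) with hf
  have hfR : ∀ w, R (f w) w := fun w => Classical.choose_spec (hin w)
  have hfne : ∀ w, f w ≠ w := by
    intro w h
    have := hfR w
    rw [h] at this
    exact hirr w this
  have key : ∀ n (S : Finset V), S.card ≤ n →
      ∃ S', S' ⊆ S ∧ S.card ≤ 3 * S'.card ∧ ∀ w ∈ S', f w ∉ S' := by
    intro n
    induction n with
    | zero =>
      intro S hS
      exact ⟨∅, by simp, by simpa using hS, by simp⟩
    | succ n ih =>
      intro S hS
      rcases S.eq_empty_or_nonempty with rfl | hne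
      · exact ⟨∅, by simp, by simp, by simp⟩
      by_cases hcase : ∀ w ∈ S, ∃ u ∈ S, f u = w
      · -- every vertex of S has a preimage in S; f is injective on S
        have himg : S ⊆ S.image f := by
          intro w hw
          obtain ⟨u, huS, hu⟩ := hcase w hw
          exact Finset.mem_image.mpr ⟨u, huS, hu⟩
        have himg' : S.image f = S :=
          (Finset.eq_of_subset_of_card_le himg Finset.card_image_le).symm
        have hinj : Set.InjOn f S :=
          Finset.injOn_of_card_image_eq (by rw [himg'])
        obtain ⟨w, hwS⟩ := hne
        obtain ⟨u, huS, hufw⟩ := hcase w hwS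
        set T := S \ {w, f w, u} with hT
        have hTsub : T ⊆ S := Finset.sdiff_subset
        have hwT : w ∉ T := by simp [hT]
        have hfwT : f w ∉ T := by simp [hT]
        have huT : u ∉ T := by simp [hT]
        have hTcard : T.card ≤ n := by
          have : T ⊆ S.erase w := by
            intro x hx
            exact Finset.mem_erase.mpr ⟨fun h => hwT (h ▸ hx), hTsub hx⟩
          have h1 := Finset.card_le_card this
          have h2 := Finset.card_erase_of_mem hwS
          omega
        obtain ⟨T', hT'sub, hT'card, hT'⟩ := ih T hTcard
        have hwT' : w ∉ T' := fun h => hwT (hT'sub h)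
        refine ⟨insert w T', ?_, ?_, ?_⟩
        · intro x hx
          rcases Finset.mem_insert.mp hx with rfl | hx
          · exact hwS
          · exact hTsub (hT'sub hx)
        · have hScard : S.card ≤ T.card + 3 := by
            have : S ⊆ T ∪ {w, f w, u} := by
              intro x hx
              by_cases h : x ∈ ({w, f w, u} : Finset V)
              · exact Finset.mem_union_right _ h
              · exact Finset.mem_union_left _ (Finset.mem_sdiff.mpr ⟨hx, h⟩)
            have h1 := Finset.card_le_card this
            have h2 := Finset.card_union_le T ({w, f w, u} : Finset V)
            have h3 : ({w, f w, u} : Finset V).card ≤ 3 := by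
              apply le_trans (Finset.card_insert_le _ _)
              have := Finset.card_insert_le (f w) ({u} : Finset V)
              simp at this ⊢
              omega
            omega
          rw [Finset.card_insert_of_notMem hwT']
          omega
        · intro x hx
          rcases Finset.mem_insert.mp hx with rfl | hx
          · intro h
            rcases Finset.mem_insert.mp h with h | h
            · exact hfne x h
            · exact hfwT (hT'sub h)
          · intro h
            rcases Finset.mem_insert.mp h with h | h
            · -- f x = w, so x is a preimage of w in S, hence x = u, contradiction
              have hxS : x ∈ S := hTsub (hT'sub hx)
              have : x = u := hinj hxS huS (by rw [h, hufw])
              exact huT (this ▸ hT'sub hx)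
            · exact hT' x hx h
      · push_neg at hcase
        obtain ⟨w, hwS, hnopre⟩ := hcase
        set T := S \ {w, f w} with hT
        have hTsub : T ⊆ S := Finset.sdiff_subset
        have hwT : w ∉ T := by simp [hT]
        have hfwT : f w ∉ T := by simp [hT]
        have hTcard : T.card ≤ n := by
          have : T ⊆ S.erase w := by
            intro x hx
            exact Finset.mem_erase.mpr ⟨fun h => hwT (h ▸ hx), hTsub hx⟩
          have h1 := Finset.card_le_card this
          have h2 := Finset.card_erase_of_mem hwS
          omega
        obtain ⟨T', hT'sub, hT'card, hT'⟩ := ih T hTcard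
        have hwT' : w ∉ T' := fun h => hwT (hT'sub h)
        refine ⟨insert w T', ?_, ?_, ?_⟩
        · intro x hx
          rcases Finset.mem_insert.mp hx with rfl | hx
          · exact hwS
          · exact hTsub (hT'sub hx)
        · have hScard : S.card ≤ T.card + 2 := by
            have : S ⊆ T ∪ {w, f w} := by
              intro x hx
              by_cases h : x ∈ ({w, f w} : Finset V)
              · exact Finset.mem_union_right _ h
              · exact Finset.mem_union_left _ (Finset.mem_sdiff.mpr ⟨hx, h⟩)
            have h1 := Finset.card_le_card this
            have h2 := Finset.card_union_le T ({w, f w} : Finset V)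
            have h3 : ({w, f w} : Finset V).card ≤ 2 := Finset.card_insert_le _ _ |>.trans (by simp)
            omega
          rw [Finset.card_insert_of_notMem hwT']
          omega
        · intro x hx
          rcases Finset.mem_insert.mp hx with rfl | hx
          · intro h
            rcases Finset.mem_insert.mp h with h | h
            · exact hfne x h
            · exact hfwT (hT'sub h)
          · intro h
            rcases Finset.mem_insert.mp h with h | h
            · exact hnopre x (hTsub (hT'sub hx)) h
            · exact hT' x hx h
  obtain ⟨S', hsub, hcard, hgood⟩ := key S.card S le_rfl
  refine ⟨S', hsub, ?_, fun w hw => ⟨f w, hgood w hw, hfR w⟩⟩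
  rw [div_le_iff₀ (by norm_num : (0:ℝ) < 3)]
  have : (S.card : ℝ) ≤ 3 * S'.card := by exact_mod_cast hcard
  linarith
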